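/- arXiv:2208.14379 — 2 statements merged into one kernel-verified Lean document; each statement's English description precedes it below -/
import Mathlib

section
/- Let Φ(t) be the fundamental solution of the linear ODE Φ'(t) = J(t)Φ(t), Φ(0) = I_n, where J : ℝ → ℝ^{n×n} is continuous. Then the k-th multiplicative compound Φ^(k)(t) satisfies the linear ODE d/dt Φ^(k)(t) = J^[k](t) Φ^(k)(t) with Φ^(k)(0) = I_r, r = (n choose k). -/
/-- The k-th multiplicative compound of a matrix: the matrix of all k×k minors,
indexed by k-element subsets of the row and column index sets. -/
noncomputable def compound {R : Type*} [CommRing R] {n m : ℕ} (k : ℕ)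
    (A : Matrix (Fin n) (Fin m) R) :
    Matrix {s : Finset (Fin n) // s.card = k} {s : Finset (Fin m) // s.card = k} R :=
  fun I J => Matrix.det (Matrix.of fun i j : Fin k =>
    A ((I.1.orderIsoOfFin I.2 i : Fin n)) ((J.1.orderIsoOfFin J.2 j : Fin m)))

/-- The k-th additive compound: `A^[k] := d/dε (I + εA)^(k) |_{ε=0}` (entrywise). -/
noncomputable def addCompound {n : ℕ} (k : ℕ) (A : Matrix (Fin n) (Fin n) ℝ) :
    Matrix {s : Finset (Fin n) // s.card = k} {s : Finset (Fin n) // s.card = k} ℝ :=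
  fun I J => deriv (fun ε : ℝ => compound k (1 + ε • A) I J) 0

open Equiv Equiv.Perm Finset Function Matrix

section CB
variable {R : Type*} [CommRing R] {k n : ℕ}

lemma image_enum (s : Finset (Fin n)) (h : s.card = k) :
    Finset.image (fun i => (s.orderIsoOfFin h i : Fin n)) Finset.univ = s := by
  ext x
  simp only [Finset.mem_image, Finset.mem_univ, true_and]
  constructor
  · rintro ⟨i, rfl⟩; exact (s.orderIsoOfFin h i).2
  · intro hx; exact ⟨(s.orderIsoOfFin h).symm ⟨x, hx⟩, by simp⟩

lemma image_enum_comp (s : Finset (Fin n)) (h : s.card = k) {g : Fin k → Fin k}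
    (hg : Function.Surjective g) :
    Finset.image (fun i => (s.orderIsoOfFin h (g i) : Fin n)) Finset.univ = s := by
  rw [show (fun i => (s.orderIsoOfFin h (g i) : Fin n))
        = (fun i => (s.orderIsoOfFin h i : Fin n)) ∘ g from rfl,
      ← Finset.image_image, Finset.image_univ_of_surjective hg, image_enum]

lemma cb_aux {A : Matrix (Fin k) (Fin n) R} {B : Matrix (Fin n) (Fin k) R}
    {p : Fin k → Fin n} (H : ¬Function.Injective p) :
    (∑ σ : Perm (Fin k), ((sign σ : ℤ) : R) * ∏ x, A (σ x) (p x) * B (p x) x) = 0 := by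
  obtain ⟨i, j, hpij, hij⟩ : ∃ i j, p i = p j ∧ i ≠ j := by
    rw [Injective] at H
    push_neg at H
    exact H
  exact
    sum_involution (fun σ _ => σ * Equiv.swap i j)
      (fun σ _ => by
        have : (∏ x, A (σ x) (p x)) = ∏ x, A ((σ * Equiv.swap i j) x) (p x) :=
          Fintype.prod_equiv (swap i j) _ _ (by simp [apply_swap_eq_self hpij])
        simp [this, sign_swap hij, -sign_swap', prod_mul_distrib])
      (fun σ _ _ => (not_congr mul_swap_eq_iff).mpr hij) (fun _ _ => mem_univ _) fun σ _ =>
      mul_swap_involutive i j σ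

lemma cauchyBinet (A : Matrix (Fin k) (Fin n) R) (B : Matrix (Fin n) (Fin k) R) :
    (A * B).det = ∑ L : {s : Finset (Fin n) // s.card = k},
      (A.submatrix id (fun i => (L.1.orderIsoOfFin L.2 i : Fin n))).det *
      (B.submatrix (fun i => (L.1.orderIsoOfFin L.2 i : Fin n)) id).det := by
  calc
    (A * B).det = ∑ p : Fin k → Fin n, ∑ σ : Perm (Fin k),
        ((sign σ : ℤ) : R) * ∏ i, A (σ i) (p i) * B (p i) i := by
      simp only [det_apply', Matrix.mul_apply, prod_univ_sum, mul_sum, Fintype.piFinset_univ]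
      rw [Finset.sum_comm]
    _ = ∑ p : Fin k → Fin n with Function.Injective p, ∑ σ : Perm (Fin k),
        ((sign σ : ℤ) : R) * ∏ i, A (σ i) (p i) * B (p i) i := by
      refine (sum_subset (filter_subset _ _) fun f _ hinj ↦ cb_aux ?_).symm
      simpa only [true_and, mem_filter, mem_univ] using hinj
    _ = ∑ x ∈ (Finset.univ : Finset {s : Finset (Fin n) // s.card = k}) ×ˢ
          (Finset.univ.filter fun g : Fin k → Fin k => Function.Bijective g),
        ∑ σ : Perm (Fin k), ((sign σ : ℤ) : R) *
          ∏ i, A (σ i) (x.1.1.orderIsoOfFin x.1.2 (x.2 i)) *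
            B (x.1.1.orderIsoOfFin x.1.2 (x.2 i)) i := by
      refine (Finset.sum_bij
        (fun (x : {s : Finset (Fin n) // s.card = k} × (Fin k → Fin k)) _ =>
          fun i => (x.1.1.orderIsoOfFin x.1.2 (x.2 i) : Fin n)) ?_ ?_ ?_ ?_).symm
      · rintro ⟨L, g⟩ hg
        simp only [mem_product, mem_filter, mem_univ, true_and] at hg
        simp only [mem_filter, mem_univ, true_and]
        intro a b hab
        exact hg.injective ((L.1.orderIsoOfFin L.2).injective (Subtype.coe_injective hab))
      · rintro ⟨L, g⟩ hg ⟨L', g'⟩ hg' h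
        simp only [mem_product, mem_filter, mem_univ, true_and] at hg hg'
        replace h : (fun i => (L.1.orderIsoOfFin L.2 (g i) : Fin n))
            = fun i => (L'.1.orderIsoOfFin L'.2 (g' i) : Fin n) := h
        have hL : L = L' := by
          apply Subtype.ext
          have h1 : Finset.image (fun i => (L.1.orderIsoOfFin L.2 (g i) : Fin n)) univ
              = Finset.image (fun i => (L'.1.orderIsoOfFin L'.2 (g' i) : Fin n)) univ := by
            rw [h]
          rwa [image_enum_comp _ _ hg.surjective, image_enum_comp _ _ hg'.surjective] at h1
        subst hL
        have hgg : g = g' := by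
          funext i
          have := congrFun h i
          exact (L.1.orderIsoOfFin L.2).injective (Subtype.coe_injective this)
        rw [hgg]
      · intro p hp
        simp only [mem_filter, mem_univ, true_and] at hp
        have hcard : (Finset.image p univ).card = k := by
          rw [Finset.card_image_of_injective _ hp, card_univ, Fintype.card_fin]
        refine ⟨⟨⟨Finset.image p univ, hcard⟩,
          fun i => ((Finset.image p univ).orderIsoOfFin hcard).symm
            ⟨p i, Finset.mem_image_of_mem p (mem_univ i)⟩⟩, ?_, ?_⟩
        · simp only [mem_product, mem_filter, mem_univ, true_and]
          rw [Fintype.bijective_iff_injective_and_card]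
          refine ⟨fun a b hab => ?_, rfl⟩
          have := ((Finset.image p univ).orderIsoOfFin hcard).symm.injective hab
          exact hp (congrArg Subtype.val this)
        · funext i
          simp
      · intros; rfl
    _ = ∑ L : {s : Finset (Fin n) // s.card = k},
        ∑ g ∈ Finset.univ.filter fun g : Fin k → Fin k => Function.Bijective g,
        ∑ σ : Perm (Fin k), ((sign σ : ℤ) : R) *
          ∏ i, A (σ i) (L.1.orderIsoOfFin L.2 (g i)) * B (L.1.orderIsoOfFin L.2 (g i)) i := by
      rw [Finset.sum_product]
    _ = ∑ L : {s : Finset (Fin n) // s.card = k},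
      (A.submatrix id (fun i => (L.1.orderIsoOfFin L.2 i : Fin n))).det *
      (B.submatrix (fun i => (L.1.orderIsoOfFin L.2 i : Fin n)) id).det := by
      refine Finset.sum_congr rfl fun L _ => ?_
      set M := A.submatrix id (fun i => (L.1.orderIsoOfFin L.2 i : Fin n)) with hM
      set N := B.submatrix (fun i => (L.1.orderIsoOfFin L.2 i : Fin n)) id with hN
      have : ∀ g : Fin k → Fin k, ∀ σ : Perm (Fin k),
          (∏ i, A (σ i) (L.1.orderIsoOfFin L.2 (g i)) * B (L.1.orderIsoOfFin L.2 (g i)) i)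
          = ∏ i, M (σ i) (g i) * N (g i) i := fun _ _ => rfl
      simp only [this]
      rw [← det_mul]
      rw [show ((Finset.univ.filter fun g : Fin k → Fin k => Function.Bijective g) :
          Finset (Fin k → Fin k)) = Finset.univ.filter fun g => Function.Injective g from ?_]
      · symm
        calc (M * N).det = ∑ p : Fin k → Fin k, ∑ σ : Perm (Fin k),
            ((sign σ : ℤ) : R) * ∏ i, M (σ i) (p i) * N (p i) i := by
              simp only [det_apply', Matrix.mul_apply, prod_univ_sum, mul_sum,
                Fintype.piFinset_univ]
              rw [Finset.sum_comm]
          _ = _ := by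
            refine (sum_subset (filter_subset _ _) fun f _ hinj ↦ ?_).symm
            have : ¬Function.Injective f := by
              simpa only [true_and, mem_filter, mem_univ] using hinj
            exact cb_aux (A := M) (B := N) this
      · ext g
        simp [Finite.injective_iff_bijective]

lemma compound_mul_apply (M N : Matrix (Fin n) (Fin n) R)
    (I J : {s : Finset (Fin n) // s.card = k}) :
    compound k (M * N) I J = ∑ L : {s : Finset (Fin n) // s.card = k},
      compound k M I L * compound k N L J := by
  have hLHS : M.submatrix (fun i => (I.1.orderIsoOfFin I.2 i : Fin n)) id *
      N.submatrix id (fun j => (J.1.orderIsoOfFin J.2 j : Fin n))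
      = Matrix.of (fun i j : Fin k =>
          (M * N) (I.1.orderIsoOfFin I.2 i) (J.1.orderIsoOfFin J.2 j)) := by
    ext i j
    simp [Matrix.mul_apply]
  have := cauchyBinet (M.submatrix (fun i => (I.1.orderIsoOfFin I.2 i : Fin n)) id)
    (N.submatrix id (fun j => (J.1.orderIsoOfFin J.2 j : Fin n)))
  rw [hLHS] at this
  exact this

end CB

section Deriv
variable {k : ℕ}

noncomputable def detD (Aval Ader : Matrix (Fin k) (Fin k) ℝ) : ℝ :=
  ∑ σ : Perm (Fin k), ((sign σ : ℤ) : ℝ) *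
    ∑ i, (∏ j ∈ Finset.univ.erase i, Aval (σ j) j) • Ader (σ i) i

lemma det_hasDerivAt {f : ℝ → Matrix (Fin k) (Fin k) ℝ}
    {Aval f' : Matrix (Fin k) (Fin k) ℝ} {t : ℝ} (hval : f t = Aval)
    (h : ∀ i j, HasDerivAt (fun s => f s i j) (f' i j) t) :
    HasDerivAt (fun s => (f s).det) (detD Aval f') t := by
  subst hval
  simp only [det_apply']
  exact HasDerivAt.fun_sum fun σ _ =>
    (HasDerivAt.fun_finsetProd (fun i _ => h (σ i) i)).const_mul _

end Deriv

/-- If `Φ` is the fundamental solution of `Φ' = J(t)Φ`, `Φ(0) = I`, with `J` continuous,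
then the k-th multiplicative compound satisfies `(Φ^(k))' = J^[k](t) Φ^(k)`,
`Φ^(k)(0) = I` (all statements entrywise). -/
theorem compound_fundamental_solution {n k : ℕ} (hk1 : 1 ≤ k) (hkn : k ≤ n)
    (Jm : ℝ → Matrix (Fin n) (Fin n) ℝ) (Φ : ℝ → Matrix (Fin n) (Fin n) ℝ)
    (hJcont : ∀ i j : Fin n, Continuous fun t => Jm t i j)
    (hΦ : ∀ (t : ℝ) (i j : Fin n), HasDerivAt (fun s => Φ s i j) ((Jm t * Φ t) i j) t)
    (hΦ0 : Φ 0 = 1) :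
    (∀ (t : ℝ) (I J : {s : Finset (Fin n) // s.card = k}),
        HasDerivAt (fun s => compound k (Φ s) I J)
          ((addCompound k (Jm t) * compound k (Φ t)) I J) t) ∧
      compound k (Φ 0) = 1 := by
  have hcomp1 : compound k (1 : Matrix (Fin n) (Fin n) ℝ)
      = (1 : Matrix {s : Finset (Fin n) // s.card = k} _ ℝ) := by
    ext I J
    by_cases hIJ : I = J
    · subst hIJ
      have hmat : (Matrix.of fun i j : Fin k =>
          (1 : Matrix (Fin n) (Fin n) ℝ) (I.1.orderIsoOfFin I.2 i) (I.1.orderIsoOfFin I.2 j))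
          = (1 : Matrix (Fin k) (Fin k) ℝ) := by
        ext i j
        by_cases hij : i = j
        · subst hij; simp [Matrix.one_apply]
        · have hne : (I.1.orderIsoOfFin I.2 i : Fin n) ≠ I.1.orderIsoOfFin I.2 j := by
            intro hc
            exact hij ((I.1.orderIsoOfFin I.2).injective (Subtype.coe_injective hc))
          simp [Matrix.one_apply, hij, hne]
      show Matrix.det _ = _
      rw [hmat, Matrix.det_one, Matrix.one_apply_eq]
    · have hsub : ¬ J.1 ⊆ I.1 := by
        intro hs
        exact hIJ (Subtype.ext (Finset.eq_of_subset_of_card_le hs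
          (by rw [I.2, J.2])).symm)
      obtain ⟨x, hxJ, hxI⟩ := Finset.not_subset.mp hsub
      show Matrix.det _ = _
      rw [Matrix.det_eq_zero_of_column_eq_zero ((J.1.orderIsoOfFin J.2).symm ⟨x, hxJ⟩)
        (fun i => ?_), (Matrix.one_apply_ne hIJ).symm]
      have hx : (J.1.orderIsoOfFin J.2 ((J.1.orderIsoOfFin J.2).symm ⟨x, hxJ⟩) : Fin n) = x := by
        simp
      rw [Matrix.of_apply, hx]
      exact Matrix.one_apply_ne (fun hc => hxI (hc ▸ (I.1.orderIsoOfFin I.2 i).2))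
  refine ⟨fun t I J => ?_, by rw [hΦ0]; exact hcomp1⟩
  have key : HasDerivAt (fun s => compound k (Φ s) I J)
      (detD (Matrix.of fun i j : Fin k =>
          Φ t (I.1.orderIsoOfFin I.2 i) (J.1.orderIsoOfFin J.2 j))
        (Matrix.of fun i j : Fin k =>
          (Jm t * Φ t) (I.1.orderIsoOfFin I.2 i) (J.1.orderIsoOfFin J.2 j))) t :=
    det_hasDerivAt rfl (fun i j => hΦ t (I.1.orderIsoOfFin I.2 i) (J.1.orderIsoOfFin J.2 j))
  -- derivative of entries of 1 + ε • Jm t at ε = 0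
  have hone : ∀ a b : Fin n, HasDerivAt (fun ε : ℝ => (1 + ε • Jm t) a b) (Jm t a b) 0 := by
    intro a b
    have heq : (fun ε : ℝ => (1 + ε • Jm t) a b)
        = fun ε => (1 : Matrix (Fin n) (Fin n) ℝ) a b + ε * Jm t a b := by
      funext ε
      simp [Matrix.add_apply, Matrix.smul_apply, smul_eq_mul]
    rw [heq]
    simpa using ((hasDerivAt_id (0 : ℝ)).mul_const (Jm t a b)).const_add
      ((1 : Matrix (Fin n) (Fin n) ℝ) a b)
  have hg : ∀ L : {s : Finset (Fin n) // s.card = k},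
      HasDerivAt (fun ε : ℝ => compound k (1 + ε • Jm t) I L)
        (detD (Matrix.of fun i j : Fin k =>
            (1 : Matrix (Fin n) (Fin n) ℝ) (I.1.orderIsoOfFin I.2 i) (L.1.orderIsoOfFin L.2 j))
          (Matrix.of fun i j : Fin k =>
            Jm t (I.1.orderIsoOfFin I.2 i) (L.1.orderIsoOfFin L.2 j))) 0 := by
    intro L
    refine det_hasDerivAt ?_
      (fun i j => hone (I.1.orderIsoOfFin I.2 i) (L.1.orderIsoOfFin L.2 j))
    have h0 : (1 + (0 : ℝ) • Jm t) = (1 : Matrix (Fin n) (Fin n) ℝ) := by simp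
    simp only [h0]
  -- entries of (1 + ε • Jm t) * Φ t
  have hent : ∀ a b : Fin n,
      HasDerivAt (fun ε : ℝ => ((1 + ε • Jm t) * Φ t) a b) ((Jm t * Φ t) a b) 0 := by
    intro a b
    have heq : (fun ε : ℝ => ((1 + ε • Jm t) * Φ t) a b)
        = fun ε => Φ t a b + ε * (Jm t * Φ t) a b := by
      funext ε
      rw [add_mul, one_mul, Matrix.smul_mul, Matrix.add_apply, Matrix.smul_apply, smul_eq_mul]
    rw [heq]
    simpa using ((hasDerivAt_id (0 : ℝ)).mul_const ((Jm t * Φ t) a b)).const_add (Φ t a b)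
  have hA : HasDerivAt (fun ε : ℝ => compound k ((1 + ε • Jm t) * Φ t) I J)
      (detD (Matrix.of fun i j : Fin k =>
          Φ t (I.1.orderIsoOfFin I.2 i) (J.1.orderIsoOfFin J.2 j))
        (Matrix.of fun i j : Fin k =>
          (Jm t * Φ t) (I.1.orderIsoOfFin I.2 i) (J.1.orderIsoOfFin J.2 j))) 0 := by
    refine det_hasDerivAt ?_
      (fun i j => hent (I.1.orderIsoOfFin I.2 i) (J.1.orderIsoOfFin J.2 j))
    have h0 : (1 + (0 : ℝ) • Jm t) * Φ t = Φ t := by simp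
    simp only [h0]
  have hB : HasDerivAt (fun ε : ℝ => ∑ L : {s : Finset (Fin n) // s.card = k},
        compound k (1 + ε • Jm t) I L * compound k (Φ t) L J)
      (∑ L : {s : Finset (Fin n) // s.card = k},
        (detD (Matrix.of fun i j : Fin k =>
            (1 : Matrix (Fin n) (Fin n) ℝ) (I.1.orderIsoOfFin I.2 i) (L.1.orderIsoOfFin L.2 j))
          (Matrix.of fun i j : Fin k =>
            Jm t (I.1.orderIsoOfFin I.2 i) (L.1.orderIsoOfFin L.2 j)))
          * compound k (Φ t) L J) 0 :=
    HasDerivAt.fun_sum fun L _ => (hg L).mul_const _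
  have hAB : (fun ε : ℝ => compound k ((1 + ε • Jm t) * Φ t) I J)
      = fun ε : ℝ => ∑ L : {s : Finset (Fin n) // s.card = k},
        compound k (1 + ε • Jm t) I L * compound k (Φ t) L J :=
    funext fun ε => compound_mul_apply _ _ I J
  rw [hAB] at hA
  have huniq := hA.unique hB
  have hfinal : (addCompound k (Jm t) * compound k (Φ t)) I J
      = detD (Matrix.of fun i j : Fin k =>
          Φ t (I.1.orderIsoOfFin I.2 i) (J.1.orderIsoOfFin J.2 j))
        (Matrix.of fun i j : Fin k =>
          (Jm t * Φ t) (I.1.orderIsoOfFin I.2 i) (J.1.orderIsoOfFin J.2 j)) := by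
    rw [Matrix.mul_apply, huniq]
    refine Finset.sum_congr rfl fun L _ => ?_
    congr 1
    exact (hg L).deriv
  rw [hfinal]
  exact key
end

section
/- Along any solution x(t) of the Andronov–Hopf oscillator starting at a in the annulus Ω = {γ₁ ≤ x₁²+x₂² ≤ γ₂} with 0 < γ₁ < 1 < γ₂, the time integral of the logarithmic norm of the Jacobian is uniformly bounded: ∫₀ᵗ (1 − x₁(s)² − x₂(s)²) ds ≤ (1/(2γ₁)) max{γ₂ − 1, 1 − γ₁} for all t ≥ 0. -/
/-- Along any solution of the Andronov–Hopf oscillator starting in the annulus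
`Ω = {γ₁ ≤ x₁²+x₂² ≤ γ₂}` (0 < γ₁ < 1 < γ₂), the integral of the logarithmic norm
`μ₂(J(x)) = 1 − x₁² − x₂²` of the Jacobian is uniformly bounded:
`∫₀ᵗ (1 − x₁(s)² − x₂(s)²) ds ≤ (1/(2γ₁)) max{γ₂−1, 1−γ₁}` for all t ≥ 0. -/
theorem hopf_mu_integral_bounded (γ₁ γ₂ : ℝ) (hγ₁ : 0 < γ₁) (h1 : γ₁ < 1) (hγ₂ : 1 < γ₂)
    (x₁ x₂ : ℝ → ℝ)
    (hx₁ : ∀ t, HasDerivAt x₁ (-x₂ t - x₁ t * ((x₁ t) ^ 2 + (x₂ t) ^ 2 - 1)) t)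
    (hx₂ : ∀ t, HasDerivAt x₂ (x₁ t - x₂ t * ((x₁ t) ^ 2 + (x₂ t) ^ 2 - 1)) t)
    (h0 : γ₁ ≤ (x₁ 0) ^ 2 + (x₂ 0) ^ 2 ∧ (x₁ 0) ^ 2 + (x₂ 0) ^ 2 ≤ γ₂) :
    ∀ t : ℝ, 0 ≤ t →
      ∫ s in (0 : ℝ)..t, (1 - (x₁ s) ^ 2 - (x₂ s) ^ 2) ≤
        (1 / (2 * γ₁)) * max (γ₂ - 1) (1 - γ₁) := by
  intro t ht
  obtain ⟨u, hu_def⟩ : ∃ u : ℝ → ℝ, u = fun s => (x₁ s) ^ 2 + (x₂ s) ^ 2 := ⟨_, rfl⟩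
  have hu : ∀ s, HasDerivAt u (2 * u s * (1 - u s)) s := by
    intro s
    have h := ((hx₁ s).fun_pow 2).fun_add ((hx₂ s).fun_pow 2)
    simp only [hu_def]
    refine h.congr_deriv ?_
    ring
  have h0u : γ₁ ≤ u 0 := by simp only [hu_def]; exact h0.1
  have hu0 : 0 < u 0 := lt_of_lt_of_le hγ₁ h0u
  -- upper bound u s ≤ u 0 + s/2 for s ≥ 0
  have hub : ∀ s, 0 ≤ s → u s ≤ u 0 + s / 2 := by
    have hant : Antitone (fun s => u s - s / 2) := by
      apply antitone_of_hasDerivAt_nonpos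
        (f' := fun s => 2 * u s * (1 - u s) - 1 / 2)
      · intro s
        exact (hu s).sub ((hasDerivAt_id s).div_const 2)
      · intro s
        show 2 * u s * (1 - u s) - 1 / 2 ≤ 0
        nlinarith [sq_nonneg (2 * u s - 1)]
    intro s hs
    have := hant hs
    simp only at this
    linarith
  obtain ⟨C, hC⟩ : ∃ C : ℝ, C = u 0 + t / 2 := ⟨_, rfl⟩
  obtain ⟨K, hK⟩ : ∃ K : ℝ, K = 2 * max (C - 1) 0 := ⟨_, rfl⟩
  have hK0 : 0 ≤ K := by rw [hK]; positivity
  have hunn : ∀ s, 0 ≤ u s := fun s => by simp only [hu_def]; positivity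
  -- positivity of u on [0,t]
  have hpos : ∀ s ∈ Set.Icc (0 : ℝ) t, 0 < u s := by
    have hmono : MonotoneOn (fun s => Real.exp (K * s) * u s) (Set.Icc 0 t) := by
      apply monotoneOn_of_hasDerivWithinAt_nonneg (convex_Icc 0 t)
        (f' := fun s => Real.exp (K * s) * (K * u s + 2 * u s * (1 - u s)))
      · exact (Real.continuous_exp.comp (continuous_const.mul continuous_id)).continuousOn.mul
          (fun s _ => ((hu s).continuousAt.continuousWithinAt))
      · intro s hs
        have hd : HasDerivAt (fun s => Real.exp (K * s) * u s)
            (Real.exp (K * s) * (K * u s + 2 * u s * (1 - u s))) s := by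
          have he : HasDerivAt (fun s => Real.exp (K * s)) (Real.exp (K * s) * K) s := by
            simpa using ((hasDerivAt_id s).const_mul K).exp
          have := he.fun_mul (hu s)
          refine this.congr_deriv ?_
          ring
        exact hd.hasDerivWithinAt
      · intro s hs
        rw [interior_Icc] at hs
        have hsle : u s ≤ C := by
          have := hub s (le_of_lt hs.1)
          have : u s ≤ u 0 + s / 2 := this
          have h2 : u 0 + s / 2 ≤ C := by
            rw [hC]; linarith [hs.2.le]
          linarith
        have hfac : 0 ≤ K * u s + 2 * u s * (1 - u s) := by
          have h1' : u s ≤ 1 + K / 2 := by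
            have hmx : C - 1 ≤ max (C - 1) 0 := le_max_left _ _
            rw [hK]; linarith
          nlinarith [mul_nonneg (hunn s) (sub_nonneg.2 h1')]
        positivity
    intro s hs
    have h01 : (0 : ℝ) ∈ Set.Icc (0 : ℝ) t := ⟨le_refl 0, ht⟩
    have := hmono h01 hs hs.1
    simp only [mul_zero, Real.exp_zero, one_mul] at this
    have hexp : 0 < Real.exp (K * s) := Real.exp_pos _
    nlinarith
  -- L = log u decays: exp(2s) * log (u s) antitone on [0,t]
  have hFant : AntitoneOn (fun s => Real.exp (2 * s) * Real.log (u s)) (Set.Icc 0 t) := by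
    apply antitoneOn_of_hasDerivWithinAt_nonpos (convex_Icc 0 t)
      (f' := fun s => Real.exp (2 * s) * (2 * Real.log (u s) + 2 * (1 - u s)))
    · apply (Real.continuous_exp.comp (continuous_const.mul continuous_id)).continuousOn.mul
      exact ContinuousOn.log (fun s _ => (hu s).continuousAt.continuousWithinAt)
        (fun s hs => (hpos s hs).ne')
    · intro s hs
      rw [interior_Icc] at hs
      have hus : 0 < u s := hpos s ⟨hs.1.le, hs.2.le⟩
      have hL : HasDerivAt (fun s => Real.log (u s)) (2 * (1 - u s)) s := by
        have := (hu s).log hus.ne'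
        convert this using 1
        field_simp
      have he : HasDerivAt (fun s => Real.exp (2 * s)) (Real.exp (2 * s) * 2) s := by
        simpa using ((hasDerivAt_id s).const_mul 2).exp
      have hd := he.fun_mul hL
      have : HasDerivAt (fun s => Real.exp (2 * s) * Real.log (u s))
          (Real.exp (2 * s) * (2 * Real.log (u s) + 2 * (1 - u s))) s := by
        refine hd.congr_deriv ?_; ring
      exact this.hasDerivWithinAt
    · intro s hs
      rw [interior_Icc] at hs
      have hus : 0 < u s := hpos s ⟨hs.1.le, hs.2.le⟩
      have hle : Real.log (u s) + 1 ≤ u s := by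
        have := Real.add_one_le_exp (Real.log (u s))
        rwa [Real.exp_log hus] at this
      have : 2 * Real.log (u s) + 2 * (1 - u s) ≤ 0 := by linarith
      have hexp : 0 < Real.exp (2 * s) := Real.exp_pos _
      nlinarith
  -- consequence: log (u t) ≤ max (log (u 0)) 0
  have hLt : Real.log (u t) ≤ max (Real.log (u 0)) 0 := by
    have h0m : (0 : ℝ) ∈ Set.Icc (0 : ℝ) t := ⟨le_refl 0, ht⟩
    have htm : t ∈ Set.Icc (0 : ℝ) t := ⟨ht, le_refl t⟩
    have := hFant h0m htm ht
    simp only [mul_zero, Real.exp_zero, one_mul] at this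
    rcases le_or_gt (Real.log (u t)) 0 with h | h
    · exact le_trans h (le_max_right _ _)
    · have hexp : 1 ≤ Real.exp (2 * t) := by
        rw [← Real.exp_zero]
        exact Real.exp_le_exp.2 (by linarith)
      have : Real.log (u t) ≤ Real.log (u 0) := by nlinarith
      exact le_trans this (le_max_left _ _)
  -- FTC
  have hint : (∫ s in (0 : ℝ)..t, (1 - (x₁ s) ^ 2 - (x₂ s) ^ 2)) =
      Real.log (u t) / 2 - Real.log (u 0) / 2 := by
    have := intervalIntegral.integral_eq_sub_of_hasDerivAt
      (f := fun s => Real.log (u s) / 2)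
      (f' := fun s => 1 - (x₁ s) ^ 2 - (x₂ s) ^ 2)
      (a := (0 : ℝ)) (b := t) ?_ ?_
    · rw [this]
    · intro s hs
      rw [Set.uIcc_of_le ht] at hs
      have hus : 0 < u s := hpos s hs
      have := ((hu s).log hus.ne').div_const 2
      refine this.congr_deriv ?_
      field_simp
      simp only [hu_def]
      ring
    · apply Continuous.intervalIntegrable
      have hc1 : Continuous x₁ := by
        rw [continuous_iff_continuousAt]; exact fun s => (hx₁ s).continuousAt
      have hc2 : Continuous x₂ := by
        rw [continuous_iff_continuousAt]; exact fun s => (hx₂ s).continuousAt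
      continuity
  rw [hint]
  -- final estimate
  have hRpos : 0 < (1 / (2 * γ₁)) * max (γ₂ - 1) (1 - γ₁) := by
    apply mul_pos
    · positivity
    · exact lt_max_of_lt_left (by linarith)
  rcases le_or_gt 0 (Real.log (u 0)) with hL0 | hL0
  · have : Real.log (u t) ≤ Real.log (u 0) := by
      rw [max_eq_left hL0] at hLt; exact hLt
    linarith
  · have hmax : max (Real.log (u 0)) 0 = 0 := max_eq_right hL0.le
    rw [hmax] at hLt
    -- need -log(u 0)/2 ≤ RHS
    have hlog : Real.log γ₁ ≤ Real.log (u 0) := by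
      apply Real.log_le_log hγ₁ h0u
    have hlogγ : -Real.log γ₁ ≤ (1 - γ₁) / γ₁ := by
      have := Real.log_le_sub_one_of_pos (show (0:ℝ) < 1/γ₁ by positivity)
      rw [Real.log_div one_ne_zero hγ₁.ne', Real.log_one] at this
      have h2 : (1:ℝ)/γ₁ - 1 = (1 - γ₁)/γ₁ := by field_simp
      linarith
    have hstep : (1 - γ₁) / (2 * γ₁) ≤ (1 / (2 * γ₁)) * max (γ₂ - 1) (1 - γ₁) := by
      rw [div_eq_mul_inv, mul_comm]
      have : (1:ℝ) / (2 * γ₁) * (1 - γ₁) ≤ 1 / (2 * γ₁) * max (γ₂ - 1) (1 - γ₁) := by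
        apply mul_le_mul_of_nonneg_left (le_max_right _ _) (by positivity)
      calc (2 * γ₁)⁻¹ * (1 - γ₁) = 1 / (2 * γ₁) * (1 - γ₁) := by rw [one_div]
        _ ≤ _ := this
    have hD : -Real.log (u 0) / 2 ≤ (1 - γ₁) / (2 * γ₁) := by
      have h1' : -Real.log (u 0) ≤ -Real.log γ₁ := by linarith
      have h2' : -Real.log γ₁ ≤ (1 - γ₁) / γ₁ := hlogγ
      have : -Real.log (u 0) / 2 ≤ ((1 - γ₁) / γ₁) / 2 := by linarith
      calc -Real.log (u 0) / 2 ≤ ((1 - γ₁) / γ₁) / 2 := this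
        _ = (1 - γ₁) / (2 * γ₁) := by ring
    linarith
end
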